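/- Let (X, Y, ⟨·,·⟩) be a dual pairing, T ⊆ X × Y, and K_T ⊆ (X×Y) × (X×Y) defined by ((x,y),(u,v)) ∈ K_T iff (x,v) ∈ T and (u,y) ∈ T. For n ≥ 2, T is n-monotone in (X,Y,⟨·,·⟩) if and only if K_T is n-monotone in (Z,Z,·), where Z = X×Y and z·w = ⟨x,v⟩ + ⟨u,y⟩ for z=(x,y), w=(u,v). -/

import Mathlib

/-- cyclic reversal on `Icc 1 n` (sends `n+1` to `n = tauN n 1`). -/
def tauN (n i : ℕ) : ℕ := if i = n + 1 then n else n + 1 - i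

lemma tauN_mem {n a : ℕ} (ha : 1 ≤ a) (ha' : a ≤ n) : 1 ≤ tauN n a ∧ tauN n a ≤ n := by
  unfold tauN; rw [if_neg (by omega)]; omega

lemma tauN_invol {n a : ℕ} (ha : 1 ≤ a) (ha' : a ≤ n) : tauN n (tauN n a) = a := by
  unfold tauN
  simp only [if_neg (show a ≠ n + 1 by omega)]
  rw [if_neg (show ¬ n + 1 - a = n + 1 by omega)]
  omega

lemma sum_comp_tauN {M : Type*} [AddCommMonoid M] (n : ℕ) (g : ℕ → M) :
    ∑ i ∈ Finset.Icc 1 n, g (tauN n i) = ∑ i ∈ Finset.Icc 1 n, g i := by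
  refine Finset.sum_nbij' (fun i => tauN n i) (fun i => tauN n i) ?_ ?_ ?_ ?_ ?_
  · intro a ha; simp only [Finset.mem_Icc] at *; exact tauN_mem ha.1 ha.2
  · intro a ha; simp only [Finset.mem_Icc] at *; exact tauN_mem ha.1 ha.2
  · intro a ha; simp only [Finset.mem_Icc] at ha; exact tauN_invol ha.1 ha.2
  · intro a ha; simp only [Finset.mem_Icc] at ha; exact tauN_invol ha.1 ha.2
  · intro a _; rfl

lemma sum_comp_succN {M : Type*} [AddCommMonoid M] (n : ℕ) (g : ℕ → M) :
    ∑ i ∈ Finset.Icc 1 n, g (if i = n then 1 else i + 1) = ∑ i ∈ Finset.Icc 1 n, g i := by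
  refine Finset.sum_nbij' (fun i => if i = n then 1 else i + 1)
    (fun i => if i = 1 then n else i - 1) ?_ ?_ ?_ ?_ ?_
  · intro a ha; simp only [Finset.mem_Icc] at *
    by_cases h : a = n
    · rw [if_pos h]; omega
    · rw [if_neg h]; omega
  · intro a ha; simp only [Finset.mem_Icc] at *
    by_cases h : a = 1
    · rw [if_pos h]; omega
    · rw [if_neg h]; omega
  · intro a ha; simp only [Finset.mem_Icc] at ha
    by_cases h : a = n
    · rw [if_pos h, if_pos rfl]; omega
    · rw [if_neg h, if_neg (by omega : ¬ a + 1 = 1)]; omega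
  · intro a ha; simp only [Finset.mem_Icc] at ha
    by_cases h : a = 1
    · rw [if_pos h, if_pos rfl]; omega
    · rw [if_neg h, if_neg (by omega : ¬ a - 1 = n)]; omega
  · intro a _; rfl

lemma key {X Y : Type*} [AddCommGroup X] [Module ℝ X] [AddCommGroup Y] [Module ℝ Y]
    (b : X →ₗ[ℝ] Y →ₗ[ℝ] ℝ) (n : ℕ) (hn : 2 ≤ n) (u : ℕ → X) (y : ℕ → Y)
    (hy : y (n + 1) = y 1) :
    ∑ i ∈ Finset.Icc 1 n, b (u (tauN n i) - u (tauN n (i + 1))) (y (tauN n i)) =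
      ∑ i ∈ Finset.Icc 1 n, b (u i) (y i - y (i + 1)) := by
  have expandL : ∀ i, b (u (tauN n i) - u (tauN n (i+1))) (y (tauN n i)) =
      b (u (tauN n i)) (y (tauN n i)) - b (u (tauN n (i+1))) (y (tauN n i)) := by
    intro i; rw [map_sub]; rfl
  have expandR : ∀ i, b (u i) (y i - y (i+1)) = b (u i) (y i) - b (u i) (y (i+1)) := by
    intro i; rw [map_sub]
  simp only [expandL, expandR, Finset.sum_sub_distrib]
  congr 1
  · exact sum_comp_tauN n (fun j => b (u j) (y j))
  · have step1 : ∑ i ∈ Finset.Icc 1 n, b (u (tauN n (i+1))) (y (tauN n i)) =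
        ∑ i ∈ Finset.Icc 1 n,
          (fun j => b (u (if j = 1 then n else j - 1)) (y j)) (tauN n i) := by
      refine Finset.sum_congr rfl fun i hi => ?_
      simp only [Finset.mem_Icc] at hi
      have : tauN n (i+1) = (if tauN n i = 1 then n else tauN n i - 1) := by
        unfold tauN
        rw [if_neg (by omega : ¬ i = n + 1)]
        by_cases h : i = n
        · rw [if_pos (by omega), if_pos (by omega)]
        · rw [if_neg (by omega), if_neg (by omega)]; omega
      rw [this]
    rw [step1, sum_comp_tauN n (fun j => b (u (if j = 1 then n else j - 1)) (y j)),
      ← sum_comp_succN n (fun j => b (u (if j = 1 then n else j - 1)) (y j))]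
    refine Finset.sum_congr rfl fun i hi => ?_
    simp only [Finset.mem_Icc] at hi
    by_cases h : i = n
    · rw [if_pos h, if_pos rfl, ← hy, h]
    · rw [if_neg h, if_neg (by omega : ¬ i + 1 = 1), Nat.add_sub_cancel]

variable {X Y : Type*} [AddCommGroup X] [Module ℝ X] [AddCommGroup Y] [Module ℝ Y]

/-- The operator `K_T : Z ⇒ Z`, `Z = X × Y`: `((x,y),(u,v)) ∈ K_T` iff
`(x,v) ∈ T` and `(u,y) ∈ T`. -/
def KGraph (T : Set (X × Y)) : Set ((X × Y) × (X × Y)) :=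
  {p | (p.1.1, p.2.2) ∈ T ∧ (p.2.1, p.1.2) ∈ T}

/-- For `n ≥ 2`, `T` is `n`-monotone in `(X, Y, ⟨·,·⟩)` iff `K_T` is `n`-monotone
in `(Z, Z, ·)` where `z·w = ⟨x,v⟩ + ⟨u,y⟩`. -/
theorem nMono_iff_nMono_KGraph (b : X →ₗ[ℝ] Y →ₗ[ℝ] ℝ) (T : Set (X × Y))
    (n : ℕ) (hn : 2 ≤ n) :
    (∀ p : ℕ → X × Y, (∀ i ∈ Finset.Icc 1 n, p i ∈ T) → p (n + 1) = p 1 →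
        0 ≤ ∑ i ∈ Finset.Icc 1 n, b ((p i).1 - (p (i + 1)).1) (p i).2)
      ↔ (∀ P : ℕ → (X × Y) × (X × Y),
          (∀ i ∈ Finset.Icc 1 n, P i ∈ KGraph T) → P (n + 1) = P 1 →
          0 ≤ ∑ i ∈ Finset.Icc 1 n,
            (b ((P i).1.1 - (P (i + 1)).1.1) (P i).2.2
              + b (P i).2.1 ((P i).1.2 - (P (i + 1)).1.2))) := by
  have tau_cyc : tauN n (n + 1) = tauN n 1 := by
    unfold tauN
    rw [if_pos rfl, if_neg (by omega)]
    omega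
  constructor
  · intro hT P hP hcyc
    rw [Finset.sum_add_distrib]
    have hA : 0 ≤ ∑ i ∈ Finset.Icc 1 n,
        b ((P i).1.1 - (P (i + 1)).1.1) (P i).2.2 := by
      have := hT (fun i => ((P i).1.1, (P i).2.2))
        (fun i hi => (hP i hi).1) (by rw [hcyc])
      simpa using this
    have hB : 0 ≤ ∑ i ∈ Finset.Icc 1 n,
        b (P i).2.1 ((P i).1.2 - (P (i + 1)).1.2) := by
      have hy : (P (n + 1)).1.2 = (P 1).1.2 := by rw [hcyc]
      have hkey := key b n hn (fun i => (P i).2.1) (fun i => (P i).1.2) hy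
      have := hT (fun i => ((P (tauN n i)).2.1, (P (tauN n i)).1.2))
        (fun i hi => by
          simp only [Finset.mem_Icc] at hi
          exact (hP (tauN n i) (Finset.mem_Icc.2 (tauN_mem hi.1 hi.2))).2)
        (by rw [tau_cyc])
      simp only at this
      rw [hkey] at this
      exact this
    exact add_nonneg hA hB
  · intro hK p hp hcyc
    set P : ℕ → (X × Y) × (X × Y) :=
      fun i => (((p i).1, (p (tauN n i)).2), ((p (tauN n i)).1, (p i).2)) with hP
    have hmem : ∀ i ∈ Finset.Icc 1 n, P i ∈ KGraph T := by
      intro i hi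
      simp only [Finset.mem_Icc] at hi
      constructor
      · show ((p i).1, (p i).2) ∈ T
        rw [Prod.mk.eta]; exact hp i (Finset.mem_Icc.2 hi)
      · show ((p (tauN n i)).1, (p (tauN n i)).2) ∈ T
        rw [Prod.mk.eta]
        exact hp (tauN n i) (Finset.mem_Icc.2 (tauN_mem hi.1 hi.2))
    have hPcyc : P (n + 1) = P 1 := by
      simp only [hP, tau_cyc, hcyc]
    have h2 := hK P hmem hPcyc
    rw [Finset.sum_add_distrib] at h2
    have hx : (p (n + 1)).1 = (p 1).1 := by rw [hcyc]
    have hkey := key b.flip n hn (fun i => (p i).2) (fun i => (p i).1) hx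
    simp only [LinearMap.flip_apply] at hkey
    have hS2 : ∑ i ∈ Finset.Icc 1 n, b (P i).2.1 ((P i).1.2 - (P (i + 1)).1.2)
        = ∑ i ∈ Finset.Icc 1 n, b ((p i).1 - (p (i + 1)).1) (p i).2 := by
      have : ∀ i, b (P i).2.1 ((P i).1.2 - (P (i + 1)).1.2)
          = b ((fun j => (p j).1) (tauN n i))
              ((fun j => (p j).2) (tauN n i) - (fun j => (p j).2) (tauN n (i+1))) := by
        intro i; rfl
      simp only [this]
      exact hkey
    have hS1 : ∑ i ∈ Finset.Icc 1 n, b ((P i).1.1 - (P (i + 1)).1.1) (P i).2.2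
        = ∑ i ∈ Finset.Icc 1 n, b ((p i).1 - (p (i + 1)).1) (p i).2 := rfl
    rw [hS1, hS2] at h2
    linarith
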